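/- Let γ₀ = (9 + √3)/26. Then 468γ₀³ − 486γ₀² + 162γ₀ + 54 = 12042/169 − 27√3/169. In particular the multiplicity e_R(𝓘(F);R) = 12042/169 − 27√3/169 is an irrational real number. -/

import Mathlib

theorem stmt_13 (γ₀ : ℝ) (hγ : γ₀ = (9 + Real.sqrt 3) / 26) :
    468 * γ₀ ^ 3 - 486 * γ₀ ^ 2 + 162 * γ₀ + 54 = 12042 / 169 - 27 * Real.sqrt 3 / 169 ∧
    Irrational (12042 / 169 - 27 * Real.sqrt 3 / 169) := by
  have hs : Real.sqrt 3 ^ 2 = 3 := Real.sq_sqrt (by norm_num)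
  have hirr : Irrational (Real.sqrt 3) := by
    simpa using Nat.Prime.irrational_sqrt (p := 3) (by norm_num)
  constructor
  · subst hγ; field_simp; linear_combination (79092 * Real.sqrt 3) * hs
  · have : Irrational ((27 / 169 : ℚ) * Real.sqrt 3) :=
      hirr.ratCast_mul (q := 27/169) (by norm_num)
    have h2 : Irrational (((12042 / 169 : ℚ) : ℝ) - ((27 / 169 : ℚ) : ℝ) * Real.sqrt 3) :=
      this.ratCast_sub _
    convert h2 using 1
    push_cast
    ring
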